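/- (FWM Lower Bound.) Let 𝒳, 𝒮, 𝒜 be finite nonempty types, μ a pmf on 𝒳, ρ(·|x) a pmf on 𝒜 for each x, and P(·|x,z) a pmf on 𝒮 for each (x,z), and let p(x,z,ŷ) = μ(x)·ρ(z|x)·P(ŷ|x,z) be the data-induced joint distribution. Let Q(·|x,ŷ) be, for each (x,ŷ), a pmf on 𝒜 with Q(z|x,ŷ) > 0 whenever p(x,z,ŷ) > 0. Then the conditional mutual information under p satisfies I(Z;Ŷ|X) ≥ (−Σ_x μ(x) Σ_z ρ(z|x) log ρ(z|x)) + Σ_{x,z,ŷ} p(x,z,ŷ) · log Q(z|x,ŷ). In words: the entropy of the belief distribution ρ plus the expected log-probability that the variational posterior Q assigns to the latent action on generated transitions is a variational lower bound on I(Z;Ŷ|X). -/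

import Mathlib

/-- FWM Lower Bound: the conditional mutual information
`I(Z;Ŷ|X)` under the data-induced joint `p(x,z,yhat) = μ(x)·ρ(z|x)·P(yhat|x,z)`
is bounded below by the entropy of the belief distribution `ρ` plus the
expected log-probability assigned by the variational posterior `Q`. -/
theorem fwm_lower_bound
    {𝒳 𝒮 𝒜 : Type*} [Fintype 𝒳] [Fintype 𝒮] [Fintype 𝒜]
    [Nonempty 𝒳] [Nonempty 𝒮] [Nonempty 𝒜]
    (μ : 𝒳 → ℝ) (hμ0 : ∀ x, 0 ≤ μ x) (hμ1 : ∑ x, μ x = 1)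
    (ρ : 𝒳 → 𝒜 → ℝ) (hρ0 : ∀ x z, 0 ≤ ρ x z) (hρ1 : ∀ x, ∑ z, ρ x z = 1)
    (P : 𝒳 → 𝒜 → 𝒮 → ℝ) (hP0 : ∀ x z yhat, 0 ≤ P x z yhat)
    (hP1 : ∀ x z, ∑ yhat, P x z yhat = 1)
    (p : 𝒳 → 𝒜 → 𝒮 → ℝ) (hp : ∀ x z yhat, p x z yhat = μ x * ρ x z * P x z yhat)
    (Q : 𝒳 → 𝒮 → 𝒜 → ℝ) (hQ0 : ∀ x yhat z, 0 ≤ Q x yhat z)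
    (hQ1 : ∀ x yhat, ∑ z, Q x yhat z = 1)
    (hQpos : ∀ x z yhat, 0 < p x z yhat → 0 < Q x yhat z) :
    ∑ x, ∑ z, ∑ yhat, p x z yhat *
        Real.log (p x z yhat * μ x / ((∑ yhat', p x z yhat') * (∑ z', p x z' yhat)))
      ≥ (-(∑ x, μ x * ∑ z, ρ x z * Real.log (ρ x z)))
        + ∑ x, ∑ z, ∑ yhat, p x z yhat * Real.log (Q x yhat z) := by
  have hpnn : ∀ x z y, 0 ≤ p x z y := by
    intro x z y
    rw [hp]
    have := hμ0 x; have := hρ0 x z; have := hP0 x z y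
    positivity
  have hpZ : ∀ x z, (∑ y', p x z y') = μ x * ρ x z := by
    intro x z
    simp only [hp, ← Finset.mul_sum, hP1, mul_one]
  have hpYnn : ∀ x y, 0 ≤ ∑ z', p x z' y := by
    intro x y
    exact Finset.sum_nonneg fun z _ => hpnn x z y
  -- termwise key inequality
  have key : ∀ x z y,
      p x z y * Real.log (p x z y * μ x / ((∑ y', p x z y') * (∑ z', p x z' y)))
        - p x z y * Real.log (Q x y z) + p x z y * Real.log (ρ x z)
      ≥ p x z y - (∑ z', p x z' y) * Q x y z := by
    intro x z y
    rcases eq_or_lt_of_le (hpnn x z y) with h0 | hpos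
    · rw [← h0]
      simp only [zero_mul, sub_zero, add_zero, zero_sub, ge_iff_le, neg_le, neg_zero]
      exact mul_nonneg (hpYnn x y) (hQ0 x y z)
    · have hμpos : 0 < μ x := by
        by_contra h
        have : μ x = 0 := le_antisymm (not_lt.mp h) (hμ0 x)
        rw [hp, this] at hpos; simp at hpos
      have hρpos : 0 < ρ x z := by
        by_contra h
        have : ρ x z = 0 := le_antisymm (not_lt.mp h) (hρ0 x z)
        rw [hp, this] at hpos; simp at hpos
      have hQp : 0 < Q x y z := hQpos x z y hpos
      have hpYpos : 0 < ∑ z', p x z' y :=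
        lt_of_lt_of_le hpos (Finset.single_le_sum (fun z' _ => hpnn x z' y)
          (Finset.mem_univ z))
      set pY := ∑ z', p x z' y with hpYdef
      have harg : p x z y * μ x / ((∑ y', p x z y') * pY) * ρ x z / Q x y z
          = p x z y / (pY * Q x y z) := by
        rw [hpZ x z]
        field_simp
      have hlog : Real.log (p x z y * μ x / ((∑ y', p x z y') * pY))
          - Real.log (Q x y z) + Real.log (ρ x z)
          = Real.log (p x z y / (pY * Q x y z)) := by
        have h1 : (0:ℝ) < p x z y * μ x / ((∑ y', p x z y') * pY) := by
          rw [hpZ x z]; positivity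
        rw [← harg, Real.log_div (by positivity) (ne_of_gt hQp),
          Real.log_mul (ne_of_gt h1) (ne_of_gt hρpos)]
        ring
      have hbound : Real.log (pY * Q x y z / p x z y) ≤ pY * Q x y z / p x z y - 1 :=
        Real.log_le_sub_one_of_pos (by positivity)
      have hloginv : Real.log (p x z y / (pY * Q x y z))
          = - Real.log (pY * Q x y z / p x z y) := by
        rw [← Real.log_inv]
        congr 1
        field_simp
      calc p x z y * Real.log (p x z y * μ x / ((∑ y', p x z y') * pY))
            - p x z y * Real.log (Q x y z) + p x z y * Real.log (ρ x z)
          = p x z y * Real.log (p x z y / (pY * Q x y z)) := by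
            rw [← hlog]; ring
        _ = p x z y * (- Real.log (pY * Q x y z / p x z y)) := by rw [hloginv]
        _ ≥ p x z y * (1 - pY * Q x y z / p x z y) := by
            have := mul_le_mul_of_nonneg_left hbound (le_of_lt hpos)
            nlinarith
        _ = p x z y - pY * Q x y z := by field_simp
  -- sum the key inequality
  have hsum : (∑ x, ∑ z, ∑ y, p x z y *
        Real.log (p x z y * μ x / ((∑ y', p x z y') * (∑ z', p x z' y))))
      - (∑ x, ∑ z, ∑ y, p x z y * Real.log (Q x y z))
      + (∑ x, ∑ z, ∑ y, p x z y * Real.log (ρ x z))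
      ≥ ∑ x, ∑ z, ∑ y, (p x z y - (∑ z', p x z' y) * Q x y z) := by
    simp only [← Finset.sum_sub_distrib, ← Finset.sum_add_distrib]
    refine Finset.sum_le_sum fun x _ => Finset.sum_le_sum fun z _ =>
      Finset.sum_le_sum fun y _ => key x z y
  have hzero : (∑ x, ∑ z, ∑ y, (p x z y - (∑ z', p x z' y) * Q x y z)) = 0 := by
    apply Finset.sum_eq_zero
    intro x _
    rw [Finset.sum_comm]
    apply Finset.sum_eq_zero
    intro y _
    rw [Finset.sum_sub_distrib, ← Finset.mul_sum, hQ1, mul_one, sub_self]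
  have hent : (∑ x, ∑ z, ∑ y, p x z y * Real.log (ρ x z))
      = ∑ x, μ x * ∑ z, ρ x z * Real.log (ρ x z) := by
    apply Finset.sum_congr rfl
    intro x _
    rw [Finset.mul_sum]
    apply Finset.sum_congr rfl
    intro z _
    rw [← Finset.sum_mul, hpZ x z]
    ring
  rw [hzero] at hsum
  rw [hent] at hsum
  linarith
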